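/- Let s > 1/2, let K be a finite nonempty set of positive integers, and let (c_k)_{k∈K} be real numbers. For every ε with 0 < ε ≤ 2s − 1, ∑_{k,ℓ∈K} c_k c_ℓ gcd(k,ℓ)^{2s}/(k^s ℓ^s) ≤ ((1+ε)/ε) ∑_{k∈K} c_k² σ_{1+ε−2s}(k), where σ_h(n) = ∑_{d|n} d^h. -/

import Mathlib

open Finset Real in

lemma step_ineq' (p : ℝ) (hp : 0 < p) (x : ℝ) (hx : 1 ≤ x) :
    (x + 1) ^ (-(1 + p)) + (x + 1) ^ (-p) / p ≤ x ^ (-p) / p := by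
  have hx0 : (0:ℝ) < x := by linarith
  have hx1 : (0:ℝ) < x + 1 := by linarith
  have hlog : 1 / (x + 1) ≤ Real.log ((x + 1) / x) := by
    have h := Real.log_le_sub_one_of_pos (show (0:ℝ) < x / (x+1) by positivity)
    have e : Real.log ((x+1)/x) = - Real.log (x/(x+1)) := by
      rw [← Real.log_inv]
      congr 1
      field_simp
    rw [e]
    have hx2 : x / (x + 1) - 1 = -(1/(x+1)) := by field_simp; ring
    rw [hx2] at h
    linarith
  have h2 : 1 + p / (x+1) ≤ ((x+1)/x) ^ p := by
    rw [Real.rpow_def_of_pos (by positivity)]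
    refine le_trans ?_ (Real.add_one_le_exp _)
    have := mul_le_mul_of_nonneg_right hlog hp.le
    rw [div_mul_eq_mul_div, one_mul] at this
    linarith
  have h3 : (x+1) ^ (-p) * (((x+1)/x) ^ p) = x ^ (-p) := by
    rw [Real.div_rpow hx1.le hx0.le, Real.rpow_neg hx1.le, Real.rpow_neg hx0.le]
    field_simp
  have h4 : (x+1) ^ (-(1+p)) = (x+1) ^ (-p) / (x+1) := by
    rw [show -(1+p) = -p + (-1) by ring, Real.rpow_add hx1, Real.rpow_neg_one]
    ring
  have expand : (x+1) ^ (-p) * (1 + p/(x+1)) = (x+1)^(-p) + p * (x+1)^(-(1+p)) := by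
    rw [h4]
    field_simp
  have h5 : (x+1)^(-p) + p * (x+1)^(-(1+p)) ≤ x ^ (-p) := by
    rw [← expand, ← h3]
    exact mul_le_mul_of_nonneg_left h2 (Real.rpow_nonneg hx1.le _)
  rw [le_div_iff₀ hp]
  have hq : ((x+1)^(-(1+p)) + (x+1)^(-p)/p)*p = p*(x+1)^(-(1+p)) + (x+1)^(-p) := by
    field_simp
  rw [hq]
  linarith

lemma sum_rpow_le' (p : ℝ) (hp : 0 < p) (N : ℕ) :
    ∑ m ∈ Finset.Icc 1 N, (m:ℝ) ^ (-(1+p)) ≤ 1 + 1/p := by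
  rcases Nat.eq_zero_or_pos N with h | h
  · subst h; simp; positivity
  · have key : ∀ n : ℕ, 1 ≤ n → ∑ m ∈ Finset.Icc 1 n, (m:ℝ)^(-(1+p)) + (n:ℝ)^(-p)/p ≤ 1 + 1/p := by
      intro n hn
      induction n, hn using Nat.le_induction with
      | base => simp
      | succ n hn ih =>
        rw [Finset.sum_Icc_succ_top (by omega)]
        have hstep := step_ineq' p hp (n:ℝ) (by exact_mod_cast hn)
        push_cast
        push_cast at ih
        linarith
    have h1 := key N h
    have h2 : (0:ℝ) ≤ (N:ℝ)^(-p)/p := by positivity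
    linarith

open Finset Real in


lemma inner_sum_le' (s ε : ℝ) (hε : 0 < ε) (K : Finset ℕ) (hpos : ∀ k ∈ K, 0 < k)
    (k : ℕ) (hk : 0 < k) :
    ∑ l ∈ K, (Nat.gcd k l : ℝ) ^ (2*s) * (l:ℝ) ^ (-(1+ε))
      ≤ (1 + 1/ε) * ∑ g ∈ k.divisors, (g:ℝ) ^ (2*s - 1 - ε) := by
  set N := K.sup id with hN
  set F : ℕ × ℕ → ℝ := fun q => (q.1:ℝ)^(2*s-1-ε) * (q.2:ℝ)^(-(1+ε)) with hF
  set e : ℕ → ℕ × ℕ := fun l => (Nat.gcd k l, l / Nat.gcd k l) with he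
  have hterm : ∀ l ∈ K, (Nat.gcd k l : ℝ)^(2*s) * (l:ℝ)^(-(1+ε)) = F (e l) := by
    intro l hl
    have hl0 := hpos l hl
    have hg : 0 < Nat.gcd k l := Nat.gcd_pos_of_pos_left _ hk
    have hldecomp : (l : ℝ) = (Nat.gcd k l : ℝ) * ((l / Nat.gcd k l : ℕ) : ℝ) := by
      rw [← Nat.cast_mul, Nat.mul_div_cancel' (Nat.gcd_dvd_right k l)]
    simp only [hF, he]
    rw [hldecomp, Real.mul_rpow (by positivity) (by positivity), ← mul_assoc,
      ← Real.rpow_add (by exact_mod_cast hg)]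
    ring_nf
  have hinj : Set.InjOn e K := by
    intro l1 h1 l2 h2 heq
    have d1 := Nat.mul_div_cancel' (Nat.gcd_dvd_right k l1)
    have d2 := Nat.mul_div_cancel' (Nat.gcd_dvd_right k l2)
    simp only [he, Prod.mk.injEq] at heq
    rw [← d1, ← d2, heq.2, heq.1]
  have himg : K.image e ⊆ k.divisors ×ˢ Finset.Icc 1 N := by
    intro q hq
    simp only [Finset.mem_image] at hq
    obtain ⟨l, hl, rfl⟩ := hq
    have hl0 := hpos l hl
    have hg : 0 < Nat.gcd k l := Nat.gcd_pos_of_pos_left _ hk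
    rw [Finset.mem_product]
    constructor
    · exact Nat.mem_divisors.2 ⟨Nat.gcd_dvd_left k l, hk.ne'⟩
    · rw [Finset.mem_Icc]
      constructor
      · rw [Nat.one_le_div_iff hg]
        exact Nat.le_of_dvd hl0 (Nat.gcd_dvd_right k l)
      · exact le_trans (Nat.div_le_self _ _) (Finset.le_sup (f := id) hl)
  calc ∑ l ∈ K, (Nat.gcd k l : ℝ)^(2*s) * (l:ℝ)^(-(1+ε))
      = ∑ q ∈ K.image e, F q := by
        rw [Finset.sum_image (fun a ha b hb => hinj ha hb)]
        exact Finset.sum_congr rfl hterm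
    _ ≤ ∑ q ∈ k.divisors ×ˢ Finset.Icc 1 N, F q := by
        refine Finset.sum_le_sum_of_subset_of_nonneg himg ?_
        intro q _ _
        exact mul_nonneg (Real.rpow_nonneg (Nat.cast_nonneg _) _)
          (Real.rpow_nonneg (Nat.cast_nonneg _) _)
    _ = (∑ g ∈ k.divisors, (g:ℝ)^(2*s-1-ε)) * (∑ m ∈ Finset.Icc 1 N, (m:ℝ)^(-(1+ε))) := by
        rw [Finset.sum_product]
        simp only [hF]
        rw [Finset.sum_mul]
        exact Finset.sum_congr rfl fun g _ => by rw [Finset.mul_sum]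
    _ ≤ (∑ g ∈ k.divisors, (g:ℝ)^(2*s-1-ε)) * (1 + 1/ε) := by
        refine mul_le_mul_of_nonneg_left (sum_rpow_le' ε hε N) ?_
        exact Finset.sum_nonneg fun g _ => Real.rpow_nonneg (Nat.cast_nonneg _) _
    _ = (1 + 1/ε) * ∑ g ∈ k.divisors, (g:ℝ)^(2*s-1-ε) := mul_comm _ _

open Finset Real in


theorem gcd_sum_le_sigma_bound (s : ℝ) (hs : 1 / 2 < s) (K : Finset ℕ) (hK : K.Nonempty)
    (hpos : ∀ k ∈ K, 0 < k) (c : ℕ → ℝ) (ε : ℝ) (hε : 0 < ε) (hε2 : ε ≤ 2 * s - 1) :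
    ∑ k ∈ K, ∑ l ∈ K,
        c k * c l * (Nat.gcd k l : ℝ) ^ (2 * s) / ((k : ℝ) ^ s * (l : ℝ) ^ s)
      ≤ ((1 + ε) / ε) * ∑ k ∈ K, (c k) ^ 2 * ∑ d ∈ k.divisors, (d : ℝ) ^ (1 + ε - 2 * s) := by
  set B : ℕ → ℕ → ℝ := fun k l =>
    c k ^ 2 * (Nat.gcd k l : ℝ) ^ (2*s) * (k:ℝ) ^ (1+ε-2*s) * (l:ℝ) ^ (-(1+ε)) with hB
  -- pointwise AM-GM bound
  have point : ∀ k ∈ K, ∀ l ∈ K,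
      c k * c l * (Nat.gcd k l : ℝ) ^ (2 * s) / ((k : ℝ) ^ s * (l : ℝ) ^ s)
        ≤ (B k l + B l k) / 2 := by
    intro k hk l hl
    have hk0 : (0:ℝ) < (k:ℝ) := by exact_mod_cast hpos k hk
    have hl0 : (0:ℝ) < (l:ℝ) := by exact_mod_cast hpos l hl
    have hG : (0:ℝ) ≤ (Nat.gcd k l : ℝ) ^ (2*s) := Real.rpow_nonneg (Nat.cast_nonneg _) _
    have hgcdcomm : (Nat.gcd l k : ℝ) = (Nat.gcd k l : ℝ) := by rw [Nat.gcd_comm]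
    have hA1 : (0:ℝ) < (k:ℝ)^s := Real.rpow_pos_of_pos hk0 _
    have hA2 : (0:ℝ) < (l:ℝ)^s := Real.rpow_pos_of_pos hl0 _
    have hB1 : (0:ℝ) < (k:ℝ)^(1+ε-s) := Real.rpow_pos_of_pos hk0 _
    have hB2 : (0:ℝ) < (l:ℝ)^(1+ε-s) := Real.rpow_pos_of_pos hl0 _
    have ek : (k:ℝ)^(1+ε-2*s) = (k:ℝ)^(1+ε-s) / (k:ℝ)^s := by
      rw [← Real.rpow_sub hk0]; ring_nf
    have el : (l:ℝ)^(1+ε-2*s) = (l:ℝ)^(1+ε-s) / (l:ℝ)^s := by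
      rw [← Real.rpow_sub hl0]; ring_nf
    have ek' : (k:ℝ)^(-(1+ε)) = 1 / ((k:ℝ)^(1+ε-s) * (k:ℝ)^s) := by
      rw [← Real.rpow_add hk0, one_div, ← Real.rpow_neg hk0.le]; ring_nf
    have el' : (l:ℝ)^(-(1+ε)) = 1 / ((l:ℝ)^(1+ε-s) * (l:ℝ)^s) := by
      rw [← Real.rpow_add hl0, one_div, ← Real.rpow_neg hl0.le]; ring_nf
    simp only [hB, hgcdcomm]
    rw [ek, el, ek', el']
    have key : (0:ℝ) ≤ (Nat.gcd k l : ℝ) ^ (2*s)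
        * (c k * (k:ℝ)^(1+ε-s) - c l * (l:ℝ)^(1+ε-s))^2
        * ((k:ℝ)^s * (k:ℝ)^s * ((l:ℝ)^s * (l:ℝ)^s)) := by positivity
    rw [div_le_div_iff₀ (by positivity) (by norm_num)]
    field_simp
    nlinarith [key, hA1, hA2, hB1, hB2, mul_nonneg hG (sq_nonneg (c k * (k:ℝ)^(1+ε-s) - c l * (l:ℝ)^(1+ε-s)))]
  calc ∑ k ∈ K, ∑ l ∈ K,
        c k * c l * (Nat.gcd k l : ℝ) ^ (2 * s) / ((k : ℝ) ^ s * (l : ℝ) ^ s)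
      ≤ ∑ k ∈ K, ∑ l ∈ K, (B k l + B l k) / 2 := by
        refine Finset.sum_le_sum fun k hk => Finset.sum_le_sum fun l hl => point k hk l hl
    _ = ∑ k ∈ K, ∑ l ∈ K, B k l := by
        have hswap : ∑ k ∈ K, ∑ l ∈ K, B l k = ∑ k ∈ K, ∑ l ∈ K, B k l :=
          Finset.sum_comm
        have e1 : ∑ k ∈ K, ∑ l ∈ K, (B k l + B l k)/2
            = ((∑ k ∈ K, ∑ l ∈ K, B k l) + (∑ k ∈ K, ∑ l ∈ K, B l k))/2 := by
          simp only [← Finset.sum_div, ← Finset.sum_add_distrib]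
        rw [e1, hswap]
        ring
    _ ≤ ∑ k ∈ K, c k ^ 2 * (k:ℝ)^(1+ε-2*s) * ((1 + 1/ε) * ∑ g ∈ k.divisors, (g:ℝ) ^ (2*s-1-ε)) := by
        refine Finset.sum_le_sum fun k hk => ?_
        have hTerm : ∑ l ∈ K, B k l
            = c k ^ 2 * (k:ℝ)^(1+ε-2*s) * ∑ l ∈ K, (Nat.gcd k l : ℝ) ^ (2*s) * (l:ℝ) ^ (-(1+ε)) := by
          rw [Finset.mul_sum]
          exact Finset.sum_congr rfl fun l _ => by simp only [hB]; ring
        rw [hTerm]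
        refine mul_le_mul_of_nonneg_left (inner_sum_le' s ε hε K hpos k (hpos k hk)) ?_
        have hk0 : (0:ℝ) < (k:ℝ) := by exact_mod_cast hpos k hk
        positivity
    _ = ((1 + ε) / ε) * ∑ k ∈ K, (c k) ^ 2 * ∑ d ∈ k.divisors, (d : ℝ) ^ (1 + ε - 2 * s) := by
        rw [Finset.mul_sum]
        refine Finset.sum_congr rfl fun k hk => ?_
        have hk1 : 0 < k := hpos k hk
        have hk0 : (0:ℝ) < (k:ℝ) := by exact_mod_cast hk1
        have hdiv : (k:ℝ)^(1+ε-2*s) * ∑ g ∈ k.divisors, (g:ℝ) ^ (2*s-1-ε)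
            = ∑ d ∈ k.divisors, (d : ℝ) ^ (1 + ε - 2 * s) := by
          rw [← Nat.sum_div_divisors k (fun d => ((d:ℕ):ℝ)^(2*s-1-ε)), Finset.mul_sum]
          refine Finset.sum_congr rfl fun d hd => ?_
          have hdk : d ∣ k := (Nat.mem_divisors.1 hd).1
          have hd0 : (0:ℝ) < (d:ℝ) := by
            exact_mod_cast Nat.pos_of_mem_divisors hd
          have hcast : ((k / d : ℕ) : ℝ) = (k:ℝ) / (d:ℝ) := Nat.cast_div hdk hd0.ne'
          rw [hcast, Real.div_rpow hk0.le hd0.le]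
          have hd0' : (0:ℝ) < (d:ℝ)^(2*s-1-ε) := Real.rpow_pos_of_pos hd0 _
          have h1 : (k:ℝ)^(1+ε-2*s) * (k:ℝ)^(2*s-1-ε) = 1 := by
            rw [← Real.rpow_add hk0, show 1+ε-2*s+(2*s-1-ε) = 0 by ring, Real.rpow_zero]
          calc (k:ℝ)^(1+ε-2*s) * ((k:ℝ)^(2*s-1-ε) / (d:ℝ)^(2*s-1-ε))
              = ((k:ℝ)^(1+ε-2*s) * (k:ℝ)^(2*s-1-ε)) / (d:ℝ)^(2*s-1-ε) := by ring
            _ = 1 / (d:ℝ)^(2*s-1-ε) := by rw [h1]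
            _ = (d:ℝ)^(1+ε-2*s) := by
                rw [one_div, ← Real.rpow_neg hd0.le, show -(2*s-1-ε) = 1+ε-2*s by ring]
        rw [← hdiv]
        have : (1 + 1/ε) = (1+ε)/ε := by field_simp; ring
        rw [this]
        ring
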